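/- Let g and f be probability mass functions on ℕ with f(x) > 0 for all x, and let α > 0. Then the density power divergence d_α(g,f) = Σ_x [ f(x)^{1+α} − ((1+α)/α) f(x)^α g(x) + (1/α) g(x)^{1+α} ] is nonnegative, and it equals zero if and only if g = f. -/

import Mathlib

open Real

private lemma dpd_term_key (α a b : ℝ) (hα : 0 < α) (ha : 0 < a) (hb : 0 ≤ b) :
    (b = a → a ^ (1 + α) - ((1 + α) / α) * a ^ α * b + (1 / α) * b ^ (1 + α) = 0) ∧
    (b ≠ a → 0 < a ^ (1 + α) - ((1 + α) / α) * a ^ α * b + (1 / α) * b ^ (1 + α)) := by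
  set t : ℝ := b / a with ht
  have htnn : 0 ≤ t := div_nonneg hb ha.le
  have hb' : b = t * a := by rw [ht, div_mul_cancel₀ b ha.ne']
  have hfa : a ^ (1 + α) = a * a ^ α := by
    rw [Real.rpow_add ha, Real.rpow_one]
  have hba : b ^ (1 + α) = t ^ (1 + α) * a ^ (1 + α) := by
    rw [hb', Real.mul_rpow htnn ha.le]
  have key : a ^ (1 + α) - ((1 + α) / α) * a ^ α * b + (1 / α) * b ^ (1 + α)
      = a ^ (1 + α) / α * (t ^ (1 + α) - (1 + α) * t + α) := by
    rw [hba, hb', hfa]; field_simp; ring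
  have bern : 1 + (1 + α) * (t - 1) ≤ t ^ (1 + α) := by
    have := one_add_mul_self_le_rpow_one_add (s := t - 1) (by linarith) (p := 1 + α) (by linarith)
    simpa using this
  have hpow : 0 < a ^ (1 + α) := Real.rpow_pos_of_pos ha _
  constructor
  · intro hba'
    have ht1 : t = 1 := by rw [ht, hba', div_self ha.ne']
    rw [key, ht1, Real.one_rpow]; ring
  · intro hne
    have ht1 : t ≠ 1 := by
      intro h; apply hne; rw [hb', h, one_mul]
    have bern' : 1 + (1 + α) * (t - 1) < t ^ (1 + α) := by
      have := one_add_mul_self_lt_rpow_one_add (s := t - 1) (by linarith)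
        (by intro h; apply ht1; linarith) (p := 1 + α) (by linarith)
      simpa using this
    rw [key]
    have : 0 < t ^ (1 + α) - (1 + α) * t + α := by nlinarith
    positivity

theorem dpd_nonneg_eq_zero_iff (g f : ℕ → ℝ) (α : ℝ) (hα : 0 < α)
    (hg0 : ∀ x, 0 ≤ g x) (hf0 : ∀ x, 0 < f x)
    (hg1 : ∑' x, g x = 1) (hf1 : ∑' x, f x = 1)
    (hsum : Summable fun x =>
      f x ^ (1 + α) - ((1 + α) / α) * f x ^ α * g x + (1 / α) * g x ^ (1 + α)) :
    0 ≤ ∑' x, (f x ^ (1 + α) - ((1 + α) / α) * f x ^ α * g x + (1 / α) * g x ^ (1 + α)) ∧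
      ((∑' x, (f x ^ (1 + α) - ((1 + α) / α) * f x ^ α * g x + (1 / α) * g x ^ (1 + α))) = 0
        ↔ g = f) := by
  have hterm : ∀ x, 0 ≤ f x ^ (1 + α) - ((1 + α) / α) * f x ^ α * g x + (1 / α) * g x ^ (1 + α) := by
    intro x
    rcases eq_or_ne (g x) (f x) with h | h
    · exact le_of_eq ((dpd_term_key α (f x) (g x) hα (hf0 x) (hg0 x)).1 h).symm
    · exact ((dpd_term_key α (f x) (g x) hα (hf0 x) (hg0 x)).2 h).le
  refine ⟨tsum_nonneg hterm, ?_, ?_⟩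
  · intro h0
    funext x
    by_contra hne
    have := Summable.tsum_pos hsum hterm x ((dpd_term_key α (f x) (g x) hα (hf0 x) (hg0 x)).2 hne)
    linarith
  · intro hgf
    have : ∀ x, f x ^ (1 + α) - ((1 + α) / α) * f x ^ α * g x + (1 / α) * g x ^ (1 + α) = 0 :=
      fun x => (dpd_term_key α (f x) (g x) hα (hf0 x) (hg0 x)).1 (by rw [hgf])
    simp only [this, tsum_zero]
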